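/- Let L > 0, let m ≥ 0 be an integer and σ ∈ (0, 1], set q = m + σ, and let c₀ = 2(2π)^m π^σ · sup_{0<y≤π} y^{−σ} sin y. Let φ(x) = Σ_{k=−n}^{n} φ_k e^{2πikx/L} be a real-valued trigonometric polynomial (so φ_{−k} = conj(φ_k)). If Σ_{k=1}^{n} k^{2q} |φ_k|² ≤ M²/(2c₀²), then for every ε > 0, ∫₀ᴸ |φ^{(m)}(x+ε) − φ^{(m)}(x)|² / ε^{2σ} · dx/L ≤ M²/L^{2q}. -/

import Mathlib

open Complex Finset intervalIntegral

noncomputable def mu16 (L : ℝ) (k : ℤ) : ℂ := 2 * Real.pi * Complex.I * k / L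

noncomputable def ef16 (L : ℝ) (k : ℤ) (x : ℝ) : ℂ := Complex.exp (mu16 L k * x)

lemma ef16_continuous (L : ℝ) (k : ℤ) : Continuous (ef16 L k) :=
  Complex.continuous_exp.comp (continuous_const.mul Complex.continuous_ofReal)

lemma clm_iteratedDeriv16 {F G : Type*} [NormedAddCommGroup F] [NormedSpace ℝ F]
    [NormedAddCommGroup G] [NormedSpace ℝ G] (g : F →L[ℝ] G) {f : ℝ → F} {m : ℕ}
    (hf : ContDiff ℝ m f) (x : ℝ) :
    iteratedDeriv m (fun y => g (f y)) x = g (iteratedDeriv m f x) := by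
  have h := g.iteratedFDeriv_comp_left (hf.contDiffAt (x := x)) (le_refl (m : WithTop ℕ∞))
  rw [iteratedDeriv_eq_iteratedFDeriv, iteratedDeriv_eq_iteratedFDeriv,
    show (fun y => g (f y)) = g ∘ f from rfl, h]
  rfl

lemma hasDerivAt_expsum16 (L : ℝ) (s : Finset ℤ) (a : ℤ → ℂ) (x : ℝ) :
    HasDerivAt (fun x : ℝ => ∑ k ∈ s, a k * ef16 L k x)
      (∑ k ∈ s, a k * mu16 L k * ef16 L k x) x := by
  apply HasDerivAt.fun_sum
  intro k _
  have h1 : HasDerivAt (fun z : ℂ => Complex.exp (mu16 L k * z))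
      (Complex.exp (mu16 L k * x) * (mu16 L k * 1)) (x : ℂ) :=
    (Complex.hasDerivAt_exp (mu16 L k * x)).comp (x : ℂ)
      ((hasDerivAt_id (x : ℂ)).const_mul (mu16 L k))
  have h2 : HasDerivAt (fun y : ℝ => Complex.exp (mu16 L k * y))
      (Complex.exp (mu16 L k * x) * (mu16 L k * 1)) x := h1.comp_ofReal
  have h3 := h2.const_mul (a k)
  simpa [ef16, mul_comm, mul_assoc, mul_left_comm] using h3

lemma iteratedDeriv_expsum16 (L : ℝ) (s : Finset ℤ) (a : ℤ → ℂ) (m : ℕ) :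
    iteratedDeriv m (fun x : ℝ => ∑ k ∈ s, a k * ef16 L k x)
      = fun x => ∑ k ∈ s, a k * mu16 L k ^ m * ef16 L k x := by
  induction m with
  | zero => funext x; simp
  | succ m ih =>
      rw [iteratedDeriv_succ, ih]
      funext x
      have h := (hasDerivAt_expsum16 L s (fun k => a k * mu16 L k ^ m) x).deriv
      rw [h]
      exact Finset.sum_congr rfl fun k _ => by ring

lemma contDiff_expsum16 (L : ℝ) (s : Finset ℤ) (a : ℤ → ℂ) (m : ℕ) :
    ContDiff ℝ m (fun x : ℝ => ∑ k ∈ s, a k * ef16 L k x) := by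
  apply ContDiff.sum
  intro k _
  exact contDiff_const.mul
    (Complex.contDiff_exp.comp (contDiff_const.mul Complex.ofRealCLM.contDiff))

lemma ortho16 (L : ℝ) (hL : 0 < L) (d : ℤ) :
    (∫ x in (0:ℝ)..L, ef16 L d x) = if d = 0 then (L : ℂ) else 0 := by
  rcases eq_or_ne d 0 with hd | hd
  · subst hd
    simp [ef16, mu16]
  · rw [if_neg hd]
    have hc : mu16 L d ≠ 0 := by
      unfold mu16
      apply div_ne_zero
      · exact mul_ne_zero (mul_ne_zero (mul_ne_zero two_ne_zero
          (Complex.ofReal_ne_zero.2 Real.pi_ne_zero)) Complex.I_ne_zero)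
          (Int.cast_ne_zero.2 hd)
      · exact Complex.ofReal_ne_zero.2 hL.ne'
    unfold ef16
    rw [integral_exp_mul_complex hc]
    have h1 : mu16 L d * (L : ℂ) = (d : ℂ) * (2 * Real.pi * Complex.I) := by
      unfold mu16
      field_simp [Complex.ofReal_ne_zero.2 hL.ne']
    rw [h1, Complex.exp_int_mul_two_pi_mul_I]
    simp

lemma parseval16 (L : ℝ) (hL : 0 < L) (s : Finset ℤ) (b : ℤ → ℂ) :
    (∫ x in (0:ℝ)..L, ‖∑ k ∈ s, b k * ef16 L k x‖ ^ 2)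
      = L * ∑ k ∈ s, ‖b k‖ ^ 2 := by
  set F : ℝ → ℂ := fun x => ∑ k ∈ s, b k * ef16 L k x with hF
  have hcontF : Continuous F := continuous_finset_sum _ fun k _ =>
    continuous_const.mul (ef16_continuous L k)
  have hGip : ∀ x : ℝ, F x * (starRingEnd ℂ) (F x)
      = ∑ k ∈ s, ∑ j ∈ s, (b k * (starRingEnd ℂ) (b j)) * ef16 L (k - j) x := by
    intro x
    rw [hF]
    simp only [map_sum, map_mul]
    rw [Finset.sum_mul_sum]
    refine Finset.sum_congr rfl fun k hk => Finset.sum_congr rfl fun j hj => ?_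
    have h1 : (starRingEnd ℂ) (ef16 L j x) = ef16 L (-j) x := by
      unfold ef16
      rw [← Complex.exp_conj]
      congr 1
      unfold mu16
      simp only [map_mul, map_div₀, Complex.conj_I, Complex.conj_ofReal, map_ofNat,
        map_intCast]
      push_cast
      ring
    have h2 : ef16 L k x * ef16 L (-j) x = ef16 L (k - j) x := by
      unfold ef16
      rw [← Complex.exp_add]
      congr 1
      unfold mu16
      push_cast
      ring
    calc b k * ef16 L k x * ((starRingEnd ℂ) (b j) * (starRingEnd ℂ) (ef16 L j x))
        = b k * (starRingEnd ℂ) (b j) * (ef16 L k x * ef16 L (-j) x) := by rw [h1]; ring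
      _ = b k * (starRingEnd ℂ) (b j) * ef16 L (k - j) x := by rw [h2]
  have hintG : IntervalIntegrable (fun x => F x * (starRingEnd ℂ) (F x))
      MeasureTheory.volume 0 L :=
    (hcontF.mul (Complex.continuous_conj.comp hcontF)).intervalIntegrable 0 L
  have hCint : (∫ x in (0:ℝ)..L, F x * (starRingEnd ℂ) (F x))
      = ((L * ∑ k ∈ s, ‖b k‖ ^ 2 : ℝ) : ℂ) := by
    calc (∫ x in (0:ℝ)..L, F x * (starRingEnd ℂ) (F x))
        = ∫ x in (0:ℝ)..L, ∑ k ∈ s, ∑ j ∈ s,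
            (b k * (starRingEnd ℂ) (b j)) * ef16 L (k - j) x := by
          simp only [hGip]
      _ = ∑ k ∈ s, ∑ j ∈ s, (b k * (starRingEnd ℂ) (b j)) *
            ∫ x in (0:ℝ)..L, ef16 L (k - j) x := by
          rw [intervalIntegral.integral_finset_sum]
          · refine Finset.sum_congr rfl fun k hk => ?_
            rw [intervalIntegral.integral_finset_sum]
            · exact Finset.sum_congr rfl fun j hj =>
                intervalIntegral.integral_const_mul _ _
            · exact fun j _ => (continuous_const.mul (ef16_continuous L (k - j))).intervalIntegrable 0 L
          · intro k _
            exact (continuous_finset_sum _ fun j _ =>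
              continuous_const.mul (ef16_continuous L (k - j))).intervalIntegrable 0 L
      _ = ∑ k ∈ s, b k * (starRingEnd ℂ) (b k) * L := by
          refine Finset.sum_congr rfl fun k hk => ?_
          rw [Finset.sum_eq_single_of_mem k hk]
          · rw [ortho16 L hL, if_pos (sub_self k)]
          · intro j hj hjk
            rw [ortho16 L hL, if_neg (sub_ne_zero.2 (Ne.symm hjk))]
            exact mul_zero _
      _ = ((L * ∑ k ∈ s, ‖b k‖ ^ 2 : ℝ) : ℂ) := by
          have hper : ∀ k ∈ s, b k * (starRingEnd ℂ) (b k) * (L : ℂ)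
              = ((‖b k‖ ^ 2 * L : ℝ) : ℂ) := fun k _ => by
            rw [Complex.mul_conj, Complex.normSq_eq_norm_sq]
            push_cast
            ring
          rw [Finset.sum_congr rfl hper]
          norm_cast
          rw [← Finset.sum_mul]
          ring
  have hre : ∀ x : ℝ, ‖F x‖ ^ 2 = (F x * (starRingEnd ℂ) (F x)).re := by
    intro x
    rw [Complex.mul_conj, Complex.ofReal_re, Complex.normSq_eq_norm_sq]
  calc (∫ x in (0:ℝ)..L, ‖F x‖ ^ 2)
      = ∫ x in (0:ℝ)..L, Complex.reCLM (F x * (starRingEnd ℂ) (F x)) := by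
        simp only [hre]; rfl
    _ = Complex.reCLM (∫ x in (0:ℝ)..L, F x * (starRingEnd ℂ) (F x)) :=
        Complex.reCLM.intervalIntegral_comp_comm hintG
    _ = L * ∑ k ∈ s, ‖b k‖ ^ 2 := by
        rw [hCint]
        simp only [Complex.reCLM_apply, Complex.ofReal_re]

lemma expI_norm16 (θ : ℝ) :
    ‖Complex.exp ((θ : ℂ) * Complex.I) - 1‖ ^ 2 = 4 * Real.sin (θ / 2) ^ 2 := by
  rw [Complex.exp_mul_I, ← Complex.ofReal_cos, ← Complex.ofReal_sin]
  rw [Complex.sq_norm]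
  have hre : ((Real.cos θ : ℂ) + (Real.sin θ : ℂ) * Complex.I - 1).re
      = Real.cos θ - 1 := by simp [Complex.cos_ofReal_re]
  have him : ((Real.cos θ : ℂ) + (Real.sin θ : ℂ) * Complex.I - 1).im
      = Real.sin θ := by simp [Complex.sin_ofReal_re, Complex.cos_ofReal_im]
  rw [Complex.normSq_apply, hre, him]
  have h2 : Real.cos (2 * (θ / 2)) = 2 * Real.cos (θ / 2) ^ 2 - 1 := Real.cos_two_mul _
  have h3 : (2 : ℝ) * (θ / 2) = θ := by ring
  rw [h3] at h2
  nlinarith [Real.sin_sq_add_cos_sq (θ / 2), Real.sin_sq_add_cos_sq θ]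

lemma sin_bound16 (σ : ℝ) (hσ0 : 0 < σ) (hσ1 : σ ≤ 1) :
    (0 < sSup ((fun y : ℝ => y ^ (-σ) * Real.sin y) '' Set.Ioc 0 Real.pi)) ∧
    ∀ y : ℝ, 0 < y →
      |Real.sin y| ≤ sSup ((fun y : ℝ => y ^ (-σ) * Real.sin y) '' Set.Ioc 0 Real.pi) * y ^ σ := by
  set C := sSup ((fun y : ℝ => y ^ (-σ) * Real.sin y) '' Set.Ioc 0 Real.pi) with hC
  have hbdd : BddAbove ((fun y : ℝ => y ^ (-σ) * Real.sin y) '' Set.Ioc 0 Real.pi) := by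
    refine ⟨Real.pi ^ (1 - σ), ?_⟩
    rintro z ⟨y, ⟨hy0, hyπ⟩, rfl⟩
    have h1 : y ^ (-σ) * Real.sin y ≤ y ^ (-σ) * y :=
      mul_le_mul_of_nonneg_left (Real.sin_le hy0.le) (Real.rpow_nonneg hy0.le _)
    have h2 : y ^ (-σ) * y = y ^ (1 - σ) := by
      rw [show (1 : ℝ) - σ = -σ + 1 by ring, Real.rpow_add hy0, Real.rpow_one]
    have h3 : y ^ (1 - σ) ≤ Real.pi ^ (1 - σ) :=
      Real.rpow_le_rpow hy0.le hyπ (by linarith)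
    calc y ^ (-σ) * Real.sin y ≤ y ^ (1 - σ) := by rw [← h2]; exact h1
      _ ≤ Real.pi ^ (1 - σ) := h3
  have hmem : (Real.pi / 2) ^ (-σ) * Real.sin (Real.pi / 2)
      ∈ (fun y : ℝ => y ^ (-σ) * Real.sin y) '' Set.Ioc 0 Real.pi :=
    ⟨Real.pi / 2, ⟨by positivity, by linarith [Real.pi_pos]⟩, rfl⟩
  have hCge : (Real.pi / 2) ^ (-σ) ≤ C := by
    have := le_csSup hbdd hmem
    rwa [Real.sin_pi_div_two, mul_one] at this
  have hCpos : 0 < C :=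
    lt_of_lt_of_le (Real.rpow_pos_of_pos (by positivity) _) hCge
  refine ⟨hCpos, fun y hy => ?_⟩
  rcases le_or_gt y Real.pi with hyπ | hyπ
  · have hsnn : 0 ≤ Real.sin y := Real.sin_nonneg_of_nonneg_of_le_pi hy.le hyπ
    rw [_root_.abs_of_nonneg hsnn]
    have h1 : y ^ (-σ) * Real.sin y ≤ C :=
      le_csSup hbdd ⟨y, ⟨hy, hyπ⟩, rfl⟩
    have h2 : Real.sin y = y ^ σ * (y ^ (-σ) * Real.sin y) := by
      rw [← mul_assoc, ← Real.rpow_add hy, add_neg_cancel, Real.rpow_zero, one_mul]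
    rw [h2, mul_comm C (y ^ σ)]
    exact mul_le_mul_of_nonneg_left h1 (Real.rpow_nonneg hy.le _)
  · have h1 : |Real.sin y| ≤ 1 := Real.abs_sin_le_one y
    have h2 : (1 : ℝ) ≤ (Real.pi / 2) ^ (-σ) * y ^ σ := by
      rw [Real.rpow_neg (by positivity)]
      rw [inv_mul_eq_div, ← Real.div_rpow hy.le (by positivity)]
      apply Real.one_le_rpow _ hσ0.le
      rw [le_div_iff₀ (by positivity)]
      linarith [Real.pi_pos]
    have h3 : (Real.pi / 2) ^ (-σ) * y ^ σ ≤ C * y ^ σ :=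
      mul_le_mul_of_nonneg_right hCge (Real.rpow_nonneg hy.le _)
    linarith

/-- The Fourier-coefficient decay condition `Σ_{k≥1} k^{2q}|φ_k|² ≤ M²/(2c₀²)` with
`c₀ = 2(2π)^m π^σ · sup_{0<y≤π} y^{−σ} sin y` implies the generalized L²-Hölder
constraint of exponent `q = m + σ` on a real-valued trigonometric polynomial `φ`. -/
theorem stmt_16 (L : ℝ) (hL : 0 < L) (m : ℕ) (σ : ℝ) (hσ0 : 0 < σ) (hσ1 : σ ≤ 1)
    (q : ℝ) (hq : q = m + σ) (M : ℝ) (hM : 0 < M)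
    (c₀ : ℝ)
    (hc₀ : c₀ = 2 * (2 * Real.pi) ^ m * Real.pi ^ σ *
      sSup ((fun y : ℝ => y ^ (-σ) * Real.sin y) '' Set.Ioc 0 Real.pi))
    (n : ℕ) (c : ℤ → ℂ) (hsym : ∀ k : ℤ, c (-k) = starRingEnd ℂ (c k))
    (φ : ℝ → ℝ)
    (hφ : ∀ x : ℝ, (φ x : ℂ) =
      ∑ k ∈ Finset.Icc (-(n : ℤ)) (n : ℤ),
        c k * Complex.exp (2 * Real.pi * Complex.I * k * x / L))
    (hdecay : ∑ k ∈ Finset.Icc (1 : ℤ) (n : ℤ), (k : ℝ) ^ (2 * q) * ‖c k‖ ^ 2 ≤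
      M ^ 2 / (2 * c₀ ^ 2)) :
    ∀ ε : ℝ, 0 < ε →
      (∫ x in (0:ℝ)..L,
          |iteratedDeriv m φ (x + ε) - iteratedDeriv m φ x| ^ 2 / ε ^ (2 * σ)) / L ≤
        M ^ 2 / L ^ (2 * q) := by
  intro ε hε
  obtain ⟨hCpos, hsin⟩ := sin_bound16 σ hσ0 hσ1
  set C := sSup ((fun y : ℝ => y ^ (-σ) * Real.sin y) '' Set.Ioc 0 Real.pi) with hCdef
  set s : Finset ℤ := Finset.Icc (-(n : ℤ)) (n : ℤ) with hs
  -- rewrite φ with ef16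
  have hψ : ∀ x : ℝ, (φ x : ℂ) = ∑ k ∈ s, c k * ef16 L k x := by
    intro x
    rw [hφ x]
    refine Finset.sum_congr rfl fun k _ => ?_
    unfold ef16 mu16
    congr 1
    ring
  have hcd : ContDiff ℝ m (fun x : ℝ => ∑ k ∈ s, c k * ef16 L k x) :=
    contDiff_expsum16 L s c m
  have hφcd : ContDiff ℝ m φ := by
    have : φ = fun x => Complex.reCLM (∑ k ∈ s, c k * ef16 L k x) := by
      funext x
      rw [← hψ x]
      simp
    rw [this]
    exact Complex.reCLM.contDiff.comp hcd
  have hiter : ∀ x : ℝ, ((iteratedDeriv m φ x : ℝ) : ℂ)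
      = ∑ k ∈ s, c k * mu16 L k ^ m * ef16 L k x := by
    intro x
    have h1 : iteratedDeriv m (fun y => Complex.ofRealCLM (φ y)) x
        = Complex.ofRealCLM (iteratedDeriv m φ x) := clm_iteratedDeriv16 _ hφcd x
    have h2 : (fun y => Complex.ofRealCLM (φ y)) = fun x : ℝ => ∑ k ∈ s, c k * ef16 L k x := by
      funext y
      simpa using hψ y
    rw [h2, iteratedDeriv_expsum16] at h1
    simpa using h1.symm
  set b : ℤ → ℂ := fun k => c k * mu16 L k ^ m * (Complex.exp (mu16 L k * (ε : ℂ)) - 1) with hb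
  have hdiff : ∀ x : ℝ, ((iteratedDeriv m φ (x + ε) - iteratedDeriv m φ x : ℝ) : ℂ)
      = ∑ k ∈ s, b k * ef16 L k x := by
    intro x
    rw [Complex.ofReal_sub, hiter, hiter, ← Finset.sum_sub_distrib]
    refine Finset.sum_congr rfl fun k _ => ?_
    rw [hb]
    unfold ef16
    rw [show ((x + ε : ℝ) : ℂ) = (x : ℂ) + (ε : ℂ) by push_cast; ring, mul_add,
      Complex.exp_add]
    ring
  have hpt : ∀ x : ℝ, |iteratedDeriv m φ (x + ε) - iteratedDeriv m φ x| ^ 2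
      = ‖∑ k ∈ s, b k * ef16 L k x‖ ^ 2 := by
    intro x
    rw [← hdiff x, Complex.norm_real, Real.norm_eq_abs]
  -- The integral
  have hI : (∫ x in (0:ℝ)..L,
      |iteratedDeriv m φ (x + ε) - iteratedDeriv m φ x| ^ 2 / ε ^ (2 * σ))
      = (L * ∑ k ∈ s, ‖b k‖ ^ 2) / ε ^ (2 * σ) := by
    simp only [hpt]
    rw [intervalIntegral.integral_div, parseval16 L hL s b]
  rw [hI]
  -- positivity facts
  have hεσ : (0 : ℝ) < ε ^ (2 * σ) := Real.rpow_pos_of_pos hε _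
  have hc₀pos : 0 < c₀ := by
    rw [hc₀]
    have h1 : (0:ℝ) < Real.pi ^ σ := Real.rpow_pos_of_pos Real.pi_pos _
    positivity
  have hLq : (0 : ℝ) < L ^ (2 * q) := Real.rpow_pos_of_pos hL _
  -- helpers for rpow with doubled exponents
  have h2σ : ∀ x : ℝ, 0 < x → x ^ (2 * σ) = (x ^ σ) ^ 2 := by
    intro x hx
    rw [show 2 * σ = σ * 2 by ring, Real.rpow_mul hx.le,
      show (2 : ℝ) = ((2 : ℕ) : ℝ) by norm_num, Real.rpow_natCast]
  have h2q : ∀ x : ℝ, 0 < x → x ^ (2 * q) = (x ^ m * x ^ σ) ^ 2 := by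
    intro x hx
    rw [hq, show 2 * ((m : ℝ) + σ) = ((m : ℝ) + σ) * 2 by ring, Real.rpow_mul hx.le,
      Real.rpow_add hx, Real.rpow_natCast,
      show (2 : ℝ) = ((2 : ℕ) : ℝ) by norm_num, Real.rpow_natCast]
  -- per-term bound for k ≥ 1
  have hterm : ∀ k : ℤ, 1 ≤ k →
      ‖b k‖ ^ 2 ≤ (c₀ ^ 2 * ε ^ (2 * σ) / L ^ (2 * q)) * ((k : ℝ) ^ (2 * q) * ‖c k‖ ^ 2) := by
    intro k hk
    have hkR : (0 : ℝ) < (k : ℝ) := by exact_mod_cast hk.trans_lt' (by norm_num)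
    have hmu : mu16 L k = (((2 * Real.pi * (k : ℝ) / L : ℝ)) : ℂ) * Complex.I := by
      unfold mu16
      push_cast
      ring
    have hnmu : ‖mu16 L k‖ = 2 * Real.pi * (k : ℝ) / L := by
      rw [hmu, norm_mul, Complex.norm_real, Complex.norm_I, mul_one, Real.norm_eq_abs,
        abs_of_pos (by positivity)]
    have hmue : mu16 L k * (ε : ℂ) = (((2 * Real.pi * (k : ℝ) * ε / L : ℝ)) : ℂ) * Complex.I := by
      unfold mu16
      push_cast
      ring
    have hexp : ‖Complex.exp (mu16 L k * (ε : ℂ)) - 1‖ ^ 2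
        = 4 * Real.sin (Real.pi * (k : ℝ) * ε / L) ^ 2 := by
      rw [hmue, expI_norm16]
      congr 2
      ring
    have hbk : ‖b k‖ ^ 2 = ‖c k‖ ^ 2 * ((2 * Real.pi * (k : ℝ) / L) ^ m) ^ 2 *
        (4 * Real.sin (Real.pi * (k : ℝ) * ε / L) ^ 2) := by
      rw [hb]
      simp only [norm_mul, norm_pow, hnmu]
      rw [mul_pow, mul_pow, hexp]
    set y : ℝ := Real.pi * (k : ℝ) * ε / L with hy
    have hypos : 0 < y := by rw [hy]; positivity
    have hsin2 : Real.sin y ^ 2 ≤ C ^ 2 * (y ^ σ) ^ 2 := by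
      have h1 := hsin y hypos
      calc Real.sin y ^ 2 = |Real.sin y| ^ 2 := (_root_.sq_abs _).symm
        _ ≤ (C * y ^ σ) ^ 2 := pow_le_pow_left₀ (abs_nonneg _) h1 2
        _ = C ^ 2 * (y ^ σ) ^ 2 := by ring
    have hyσ : y ^ σ = Real.pi ^ σ * (k : ℝ) ^ σ * ε ^ σ / L ^ σ := by
      rw [hy, Real.div_rpow (by positivity) hL.le,
        Real.mul_rpow (by positivity) hε.le, Real.mul_rpow Real.pi_pos.le hkR.le]
    have hstep : ‖b k‖ ^ 2 ≤ ‖c k‖ ^ 2 * ((2 * Real.pi * (k : ℝ) / L) ^ m) ^ 2 *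
        (4 * (C ^ 2 * (y ^ σ) ^ 2)) := by
      rw [hbk]
      have hnn : (0:ℝ) ≤ ‖c k‖ ^ 2 * ((2 * Real.pi * (k : ℝ) / L) ^ m) ^ 2 := by positivity
      exact mul_le_mul_of_nonneg_left
        (mul_le_mul_of_nonneg_left hsin2 (by norm_num : (0:ℝ) ≤ 4)) hnn
    refine hstep.trans (le_of_eq ?_)
    rw [hyσ, h2q L hL, h2q ((k : ℝ)) hkR, h2σ ε hε, hc₀]
    have hLσ : (0:ℝ) < L ^ σ := Real.rpow_pos_of_pos hL _
    have hLm : (0:ℝ) < (L:ℝ) ^ m := by positivity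
    field_simp
    rw [div_pow]
    field_simp
    ring
  -- symmetry of b-norms
  have hbneg : ∀ k : ℤ, ‖b (-k)‖ = ‖b k‖ := by
    intro k
    have hmu : mu16 L (-k) = (starRingEnd ℂ) (mu16 L k) := by
      unfold mu16
      simp only [map_div₀, map_mul, Complex.conj_I, Complex.conj_ofReal, map_ofNat,
        map_intCast]
      push_cast
      ring
    have hbc : b (-k) = (starRingEnd ℂ) (b k) := by
      rw [hb]
      simp only
      rw [hsym, hmu, ← map_pow, show (starRingEnd ℂ) (mu16 L k) * (ε : ℂ)
          = (starRingEnd ℂ) (mu16 L k * (ε : ℂ)) by rw [map_mul, Complex.conj_ofReal],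
        Complex.exp_conj, show (1 : ℂ) = (starRingEnd ℂ) 1 by simp, ← map_sub, ← map_mul,
        ← map_mul]
      congr 1
      simp
    rw [hbc]
    exact RCLike.norm_conj _
  have hb0 : b 0 = 0 := by
    rw [hb]
    simp [mu16]
  -- split the sum
  have hsplit : ∑ k ∈ s, ‖b k‖ ^ 2 = 2 * ∑ k ∈ Finset.Icc (1 : ℤ) (n : ℤ), ‖b k‖ ^ 2 := by
    have h1 : s = Finset.Icc (-(n : ℤ)) (-1) ∪ Finset.Icc 0 (n : ℤ) := by
      rw [hs]
      ext z
      simp only [Finset.mem_Icc, Finset.mem_union]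
      omega
    have hdisj : Disjoint (Finset.Icc (-(n : ℤ)) (-1)) (Finset.Icc 0 (n : ℤ)) := by
      rw [Finset.disjoint_left]
      intro z hz1 hz2
      simp only [Finset.mem_Icc] at hz1 hz2
      omega
    have h2 : ∑ k ∈ Finset.Icc (-(n : ℤ)) (-1), ‖b k‖ ^ 2
        = ∑ k ∈ Finset.Icc (1 : ℤ) (n : ℤ), ‖b k‖ ^ 2 := by
      refine Finset.sum_nbij' (fun k => -k) (fun k => -k) ?_ ?_ ?_ ?_ ?_
      · intro a ha; simp only [Finset.mem_Icc] at ha ⊢; omega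
      · intro a ha; simp only [Finset.mem_Icc] at ha ⊢; omega
      · intro a _; ring
      · intro a _; ring
      · intro a _
        rw [show a = -(-a) by ring, hbneg (-a)]
        ring_nf
    have h3 : Finset.Icc (0 : ℤ) (n : ℤ) = insert 0 (Finset.Icc (1 : ℤ) (n : ℤ)) := by
      ext z
      simp only [Finset.mem_Icc, Finset.mem_insert]
      omega
    rw [h1, Finset.sum_union hdisj, h2, h3,
      Finset.sum_insert (by simp [Finset.mem_Icc]), hb0]
    simp
    ring
  -- assemble
  have hS : ∑ k ∈ s, ‖b k‖ ^ 2 ≤ ε ^ (2 * σ) * (M ^ 2 / L ^ (2 * q)) := by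
    rw [hsplit]
    have h1 : ∑ k ∈ Finset.Icc (1 : ℤ) (n : ℤ), ‖b k‖ ^ 2
        ≤ (c₀ ^ 2 * ε ^ (2 * σ) / L ^ (2 * q)) *
          ∑ k ∈ Finset.Icc (1 : ℤ) (n : ℤ), (k : ℝ) ^ (2 * q) * ‖c k‖ ^ 2 := by
      rw [Finset.mul_sum]
      refine Finset.sum_le_sum fun k hk => ?_
      exact hterm k (Finset.mem_Icc.1 hk).1
    have h2 : (c₀ ^ 2 * ε ^ (2 * σ) / L ^ (2 * q)) *
        ∑ k ∈ Finset.Icc (1 : ℤ) (n : ℤ), (k : ℝ) ^ (2 * q) * ‖c k‖ ^ 2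
        ≤ (c₀ ^ 2 * ε ^ (2 * σ) / L ^ (2 * q)) * (M ^ 2 / (2 * c₀ ^ 2)) :=
      mul_le_mul_of_nonneg_left hdecay (by positivity)
    have h3 : 2 * ((c₀ ^ 2 * ε ^ (2 * σ) / L ^ (2 * q)) * (M ^ 2 / (2 * c₀ ^ 2)))
        = ε ^ (2 * σ) * (M ^ 2 / L ^ (2 * q)) := by
      field_simp
    linarith
  have hfinal : (L * ∑ k ∈ s, ‖b k‖ ^ 2) / ε ^ (2 * σ) / L
      = (∑ k ∈ s, ‖b k‖ ^ 2) / ε ^ (2 * σ) := by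
    field_simp
  rw [hfinal, div_le_iff₀ hεσ]
  calc ∑ k ∈ s, ‖b k‖ ^ 2 ≤ ε ^ (2 * σ) * (M ^ 2 / L ^ (2 * q)) := hS
    _ = M ^ 2 / L ^ (2 * q) * ε ^ (2 * σ) := by ring
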